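/- arXiv:2207.08113 — 4 statements merged into one kernel-verified Lean document; each statement's English description precedes it below -/
import Mathlib

section
/- Let E be a set and ξ̃ denote the signed square root map on ℓ¹(E, ℝ) (b_e = √c_e if c_e ≥ 0, b_e = -√|c_e| otherwise). Then for any ξ₁, ξ₂ ∈ ℓ¹(E, ℝ), ‖ξ̃₁ - ξ̃₂‖₂² ≤ 2‖ξ₁ - ξ₂‖₁. -/
/-- The signed square root of a real number. -/
noncomputable def signedSqrt (c : ℝ) : ℝ := if 0 ≤ c then Real.sqrt c else -Real.sqrt |c|

lemma signedSqrt_key (c₁ c₂ : ℝ) :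
    (signedSqrt c₁ - signedSqrt c₂) ^ 2 ≤ 2 * |c₁ - c₂| := by
  unfold signedSqrt
  have h1 := Real.sqrt_nonneg |c₁|
  have h2 := Real.sqrt_nonneg |c₂|
  have s1 : Real.sqrt |c₁| ^ 2 = |c₁| := Real.sq_sqrt (abs_nonneg _)
  have s2 : Real.sqrt |c₂| ^ 2 = |c₂| := Real.sq_sqrt (abs_nonneg _)
  split_ifs with hc1 hc2 hc2
  · have s1' : Real.sqrt c₁ ^ 2 = c₁ := Real.sq_sqrt hc1
    have s2' : Real.sqrt c₂ ^ 2 = c₂ := Real.sq_sqrt hc2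
    rcases le_total c₁ c₂ with h | h
    · have hs : Real.sqrt c₁ ≤ Real.sqrt c₂ := Real.sqrt_le_sqrt h
      have he : |c₁ - c₂| = c₂ - c₁ := by rw [abs_sub_comm]; exact abs_of_nonneg (by linarith)
      nlinarith [mul_nonneg (Real.sqrt_nonneg c₁) (sub_nonneg.2 hs)]
    · have hs : Real.sqrt c₂ ≤ Real.sqrt c₁ := Real.sqrt_le_sqrt h
      have he : |c₁ - c₂| = c₁ - c₂ := abs_of_nonneg (by linarith)
      nlinarith [mul_nonneg (Real.sqrt_nonneg c₂) (sub_nonneg.2 hs)]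
  · push_neg at hc2
    have s1' : Real.sqrt c₁ ^ 2 = c₁ := Real.sq_sqrt hc1
    have h2a : |c₂| = -c₂ := abs_of_neg hc2
    have he : |c₁ - c₂| = c₁ - c₂ := abs_of_nonneg (by linarith)
    nlinarith [sq_nonneg (Real.sqrt c₁ - Real.sqrt |c₂|)]
  · push_neg at hc1
    have s2' : Real.sqrt c₂ ^ 2 = c₂ := Real.sq_sqrt hc2
    have h1a : |c₁| = -c₁ := abs_of_neg hc1
    have he : |c₁ - c₂| = c₂ - c₁ := by rw [abs_sub_comm]; exact abs_of_nonneg (by linarith)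
    nlinarith [sq_nonneg (Real.sqrt |c₁| - Real.sqrt c₂)]
  · push_neg at hc1 hc2
    have h1a : |c₁| = -c₁ := abs_of_neg hc1
    have h2a : |c₂| = -c₂ := abs_of_neg hc2
    rcases le_total c₁ c₂ with h | h
    · have hs : Real.sqrt |c₂| ≤ Real.sqrt |c₁| :=
        Real.sqrt_le_sqrt (by rw [h1a, h2a]; linarith)
      have he : |c₁ - c₂| = c₂ - c₁ := by rw [abs_sub_comm]; exact abs_of_nonneg (by linarith)
      nlinarith [mul_nonneg h2 (sub_nonneg.2 hs)]
    · have hs : Real.sqrt |c₁| ≤ Real.sqrt |c₂| :=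
        Real.sqrt_le_sqrt (by rw [h1a, h2a]; linarith)
      have he : |c₁ - c₂| = c₁ - c₂ := abs_of_nonneg (by linarith)
      nlinarith [mul_nonneg h1 (sub_nonneg.2 hs)]

theorem signedSqrt_diff_l2_le {E : Type*} (ξ₁ ξ₂ : E → ℝ)
    (h₁ : Memℓp ξ₁ 1) (h₂ : Memℓp ξ₂ 1) :
    ∑' e, (signedSqrt (ξ₁ e) - signedSqrt (ξ₂ e)) ^ 2 ≤ 2 * ∑' e, |ξ₁ e - ξ₂ e| := by
  have hs₁ : Summable ξ₁ := by
    have h := h₁.summable (by simp : 0 < (1:ENNReal).toReal)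
    simp only [ENNReal.toReal_one, Real.rpow_one] at h
    exact h.of_norm
  have hs₂ : Summable ξ₂ := by
    have h := h₂.summable (by simp : 0 < (1:ENNReal).toReal)
    simp only [ENNReal.toReal_one, Real.rpow_one] at h
    exact h.of_norm
  have hsd : Summable fun e => |ξ₁ e - ξ₂ e| := (hs₁.sub hs₂).abs
  have hL : Summable fun e => (signedSqrt (ξ₁ e) - signedSqrt (ξ₂ e)) ^ 2 :=
    Summable.of_nonneg_of_le (fun e => sq_nonneg _)
      (fun e => signedSqrt_key (ξ₁ e) (ξ₂ e)) (hsd.mul_left 2)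
  calc ∑' e, (signedSqrt (ξ₁ e) - signedSqrt (ξ₂ e)) ^ 2
      ≤ ∑' e, 2 * |ξ₁ e - ξ₂ e| :=
        Summable.tsum_le_tsum (fun e => signedSqrt_key (ξ₁ e) (ξ₂ e)) hL (hsd.mul_left 2)
    _ = 2 * ∑' e, |ξ₁ e - ξ₂ e| := tsum_mul_left
end

section
/- Let G be a group and X₀ a generating set of G with X₀ = X₀⁻¹ and 1 ∈ X₀. Let X = X₀² = {gh : g, h ∈ X₀}. Then the Cayley graph Γ(G, X) (simple graph with vertex set G and edges between g and gs for s ∈ X \ {1}) is 2-vertex-connected, i.e. connected and remains connected after removing any single vertex, provided G has at least 3 elements. -/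
open scoped Pointwise

section Aux
variable {G : Type*} [Group G]

private abbrev CayG (X₀ : Set G) : SimpleGraph G :=
  SimpleGraph.fromRel (fun g h : G => g⁻¹ * h ∈ X₀ * X₀)

private lemma reach_of_eq {V : Type*} (Γ : SimpleGraph V) {a b : V} (h : a = b) :
    Γ.Reachable a b := h ▸ SimpleGraph.Reachable.refl a

private lemma mem_sq (X₀ : Set G) (hone : (1:G) ∈ X₀) {s : G} (hs : s ∈ X₀) :
    s ∈ X₀ * X₀ := by
  simpa using Set.mul_mem_mul hs hone

private lemma step_reach (X₀ : Set G) (g : G) {s : G} (hs : s ∈ X₀ * X₀) :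
    (CayG X₀).Reachable g (g * s) := by
  by_cases h : g = g * s
  · exact reach_of_eq _ h
  · exact SimpleGraph.Adj.reachable (by
      rw [SimpleGraph.fromRel_adj]
      exact ⟨h, Or.inl (by simpa using hs)⟩)

private lemma list_reach (X₀ : Set G) (hone : (1:G) ∈ X₀) :
    ∀ (l : List G), (∀ y ∈ l, y ∈ X₀) → ∀ g, (CayG X₀).Reachable g (g * l.prod)
  | [], _, g => reach_of_eq _ (by simp)
  | s :: l, hmem, g => by
    have r1 := step_reach X₀ g (mem_sq X₀ hone (hmem s (by simp)))
    have r2 := list_reach X₀ hone l (fun y hy => hmem y (by simp [hy])) (g * s)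
    exact r1.trans (r2.trans (reach_of_eq _ (by simp [mul_assoc])))

private lemma step_reach' (X₀ : Set G) (v : G) {g s : G} (hs : s ∈ X₀ * X₀)
    (hg : g ≠ v) (hgs : g * s ≠ v) :
    ((CayG X₀).induce {v}ᶜ).Reachable ⟨g, hg⟩ ⟨g * s, hgs⟩ := by
  by_cases h : g = g * s
  · exact reach_of_eq _ (Subtype.ext h)
  · exact SimpleGraph.Adj.reachable (by
      show (CayG X₀).Adj g (g * s)
      rw [SimpleGraph.fromRel_adj]
      exact ⟨h, Or.inl (by simpa using hs)⟩)

private lemma avoid_reach (X₀ : Set G) (hone : (1:G) ∈ X₀) (v : G) :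
    ∀ (l : List G), (∀ y ∈ l, y ∈ X₀) →
      ∀ g, ∀ hg : g ≠ v, ∀ hgl : g * l.prod ≠ v,
        ((CayG X₀).induce {v}ᶜ).Reachable ⟨g, hg⟩ ⟨g * l.prod, hgl⟩
  | [], _, g, hg, hgl => reach_of_eq _ (Subtype.ext (by simp))
  | s :: l', hmem, g, hg, hgl => by
    have hs : s ∈ X₀ := hmem s (by simp)
    have hmem' : ∀ y ∈ l', y ∈ X₀ := fun y hy => hmem y (by simp [hy])
    by_cases hgs : g * s = v
    · match l' with
      | [] => exact absurd (by simp [hgs]) hgl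
      | t :: l'' =>
        by_cases ht1 : t = 1
        · have h2 : g * (s :: l'').prod ≠ v := by
            simpa [ht1, List.prod_cons] using hgl
          have hmem'' : ∀ y ∈ s :: l'', y ∈ X₀ := by
            intro y hy
            rcases List.mem_cons.mp hy with h | h
            · exact h ▸ hs
            · exact hmem y (by simp [h])
          have r := avoid_reach X₀ hone v (s :: l'') hmem'' g hg h2
          exact r.trans (reach_of_eq _ (Subtype.ext (by simp [ht1, List.prod_cons])))
        · have ht : t ∈ X₀ := hmem t (by simp)
          have hst : s * t ∈ X₀ * X₀ := Set.mul_mem_mul hs ht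
          have hgst : g * (s * t) ≠ v := by
            rw [← mul_assoc, hgs]
            intro h
            exact ht1 (mul_left_cancel (a := v) (by rw [mul_one]; exact h))
          have hrec : (g * (s * t)) * l''.prod ≠ v := by
            have he : (g * (s * t)) * l''.prod = g * (s :: t :: l'').prod := by
              simp [List.prod_cons, mul_assoc]
            rw [he]; exact hgl
          have r1 := step_reach' X₀ v hst hg hgst
          have r2 := avoid_reach X₀ hone v l'' (fun y hy => hmem y (by simp [hy]))
            (g * (s * t)) hgst hrec
          exact (r1.trans r2).trans (reach_of_eq _ (Subtype.ext (by simp [List.prod_cons, mul_assoc])))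
    · have r1 := step_reach' X₀ v (mem_sq X₀ hone hs) hg hgs
      have hrec : (g * s) * l'.prod ≠ v := by
        rw [mul_assoc]; simpa [List.prod_cons] using hgl
      have r2 := avoid_reach X₀ hone v l' hmem' (g * s) hgs hrec
      exact (r1.trans r2).trans (reach_of_eq _ (Subtype.ext (by simp [mul_assoc])))
termination_by l _ _ _ _ => l.length

end Aux

theorem cayley_graph_two_vertex_connected {G : Type*} [Group G] (X₀ : Set G)
    (hgen : Subgroup.closure X₀ = ⊤) (hsymm : X₀⁻¹ = X₀) (hone : (1 : G) ∈ X₀)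
    (hcard : ∃ a b c : G, a ≠ b ∧ a ≠ c ∧ b ≠ c) :
    (SimpleGraph.fromRel (fun g h : G => g⁻¹ * h ∈ X₀ * X₀)).Connected ∧
    ∀ v : G,
      ((SimpleGraph.fromRel (fun g h : G => g⁻¹ * h ∈ X₀ * X₀)).induce {v}ᶜ).Connected := by
  obtain ⟨a, b, c, hab, hac, hbc⟩ := hcard
  have hmono : ∀ x : G, x ∈ Submonoid.closure X₀ := by
    intro x
    have hx : x ∈ (Subgroup.closure X₀).toSubmonoid := by rw [hgen]; trivial
    rwa [Subgroup.closure_toSubmonoid, hsymm, Set.union_self] at hx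
  constructor
  · haveI : Nonempty G := ⟨a⟩
    refine SimpleGraph.Connected.mk ?_
    intro g h
    obtain ⟨l, hl, hprod⟩ := Submonoid.exists_list_of_mem_closure (hmono (g⁻¹ * h))
    have r := list_reach X₀ hone l hl g
    rwa [hprod, mul_inv_cancel_left] at r
  · intro v
    haveI : Nonempty ({v}ᶜ : Set G) := by
      by_cases h : a = v
      · exact ⟨⟨b, fun hb => hab (h.trans hb.symm)⟩⟩
      · exact ⟨⟨a, h⟩⟩
    refine SimpleGraph.Connected.mk ?_
    rintro ⟨g, hg⟩ ⟨h, hh⟩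
    have hg' : g ≠ v := hg
    have hh' : h ≠ v := hh
    obtain ⟨l, hl, hprod⟩ := Submonoid.exists_list_of_mem_closure (hmono (g⁻¹ * h))
    have hgl : g * l.prod ≠ v := by rw [hprod, mul_inv_cancel_left]; exact hh'
    have r := avoid_reach X₀ hone v l hl g hg' hgl
    exact r.trans (reach_of_eq _ (Subtype.ext (show g * l.prod = h by rw [hprod, mul_inv_cancel_left])))
end

section
/- Let Y be a connected simple graph, a, b ∈ V(Y) two vertices, p₁, …, p_N paths from a to b regarded as 1-chains (sums of oriented edges with coefficient 1), and α₁, …, α_N complex numbers. Then |Σⱼ αⱼ| · d_Y(a, b) ≤ ‖Σⱼ αⱼ pⱼ‖₁, where ‖·‖₁ is the ℓ¹-norm on 1-chains and d_Y is the graph metric. -/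
open scoped Classical
/-- The 1-chain associated to a walk: the coefficient of the oriented edge `x = (u,v)` is
the number of times the walk traverses `u → v` minus the number of times it traverses
`v → u` (so that `[v,u] = -[u,v]`). -/
noncomputable def walkChain {V : Type*} {Y : SimpleGraph V} {a b : V} (p : Y.Walk a b) :
    V × V → ℂ := fun x =>
  (p.darts.map (fun d => (if x = d.toProd then (1 : ℂ) else 0) -
    (if x = d.toProd.swap then 1 else 0))).sum

section Aux
variable {V : Type*} {Y : SimpleGraph V}

/-- telescoping sum over darts -/
lemma dart_telescope {a b : V} (p : Y.Walk a b) (f : V → ℂ) :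
    (p.darts.map (fun d => f d.toProd.2 - f d.toProd.1)).sum = f b - f a := by
  induction p with
  | nil => simp
  | cons h q ih => simp [ih]

/-- support finset of a walk chain -/
noncomputable def walkSupp {a b : V} (p : Y.Walk a b) : Finset (V × V) :=
  (p.darts.map SimpleGraph.Dart.toProd).toFinset ∪
    (p.darts.map (Prod.swap ∘ SimpleGraph.Dart.toProd)).toFinset

lemma walkChain_eq_zero {a b : V} (p : Y.Walk a b) {x : V × V}
    (hx : x ∉ walkSupp p) : walkChain p x = 0 := by
  simp only [walkSupp, Finset.mem_union, List.mem_toFinset, List.mem_map,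
    not_or, not_exists, not_and] at hx
  obtain ⟨h1, h2⟩ := hx
  unfold walkChain
  apply List.sum_eq_zero
  intro y hy
  simp only [List.mem_map] at hy
  obtain ⟨d, hd, rfl⟩ := hy
  have e1 : x ≠ d.toProd := fun h => h1 d hd h.symm
  have e2 : x ≠ d.toProd.swap := fun h => h2 d hd h.symm
  simp [e1, e2]

lemma mem_supp_adj {a b : V} (p : Y.Walk a b) {x : V × V}
    (hx : x ∈ walkSupp p) : Y.Adj x.1 x.2 := by
  simp only [walkSupp, Finset.mem_union, List.mem_toFinset, List.mem_map] at hx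
  rcases hx with ⟨d, _, rfl⟩ | ⟨d, _, rfl⟩
  · exact d.adj
  · exact d.adj.symm

lemma sum_walkChain_mul {a b : V} (p : Y.Walk a b) (f : V → ℂ)
    (s : Finset (V × V)) (hs : walkSupp p ⊆ s) :
    ∑ x ∈ s, walkChain p x * (f x.2 - f x.1) = 2 * (f b - f a) := by
  induction p with
  | nil => simp [walkChain]
  | @cons u v w h q ih =>
    have hdarts : (SimpleGraph.Walk.cons h q).darts =
        ⟨(u, v), h⟩ :: q.darts := rfl
    have hsub : walkSupp q ⊆ s := by
      refine subset_trans ?_ hs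
      intro x hx
      simp only [walkSupp, hdarts, Finset.mem_union, List.mem_toFinset, List.mem_map] at hx ⊢
      rcases hx with ⟨d, hd, rfl⟩ | ⟨d, hd, rfl⟩
      · exact Or.inl ⟨d, List.mem_cons_of_mem _ hd, rfl⟩
      · exact Or.inr ⟨d, List.mem_cons_of_mem _ hd, rfl⟩
    have huv : ((u, v) : V × V) ∈ s := by
      apply hs; simp [walkSupp, hdarts]
    have hvu : ((v, u) : V × V) ∈ s := by
      apply hs; simp [walkSupp, hdarts]
    have expand : ∀ x : V × V, walkChain (SimpleGraph.Walk.cons h q) x =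
        ((if x = ((u,v) : V × V) then (1:ℂ) else 0) -
          (if x = ((v,u) : V × V) then 1 else 0)) + walkChain q x := by
      intro x
      simp [walkChain, hdarts, Prod.swap]
    calc ∑ x ∈ s, walkChain (SimpleGraph.Walk.cons h q) x * (f x.2 - f x.1)
        = ∑ x ∈ s, (((if x = ((u,v) : V × V) then (1:ℂ) else 0) -
            (if x = ((v,u) : V × V) then 1 else 0)) * (f x.2 - f x.1)
            + walkChain q x * (f x.2 - f x.1)) := by
          apply Finset.sum_congr rfl; intro x _; rw [expand x]; ring
      _ = (∑ x ∈ s, ((if x = ((u,v) : V × V) then (1:ℂ) else 0) -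
            (if x = ((v,u) : V × V) then 1 else 0)) * (f x.2 - f x.1))
            + ∑ x ∈ s, walkChain q x * (f x.2 - f x.1) := Finset.sum_add_distrib
      _ = 2 * (f w - f u) := by
          rw [ih hsub]
          have : ∀ x : V × V, ((if x = ((u,v) : V × V) then (1:ℂ) else 0) -
              (if x = ((v,u) : V × V) then 1 else 0)) * (f x.2 - f x.1)
              = (if x = ((u,v) : V × V) then f v - f u else 0) +
                (if x = ((v,u) : V × V) then f v - f u else 0) := by
            intro x
            have hne : u ≠ v := h.ne
            by_cases h1 : x = ((u,v) : V × V)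
            · have h2 : x ≠ ((v,u) : V × V) := by
                subst h1; simp [Prod.ext_iff, hne]
              simp [h1, h2, hne]
            · by_cases h2 : x = ((v,u) : V × V)
              · simp [h1, h2, hne, Ne.symm hne]
              · simp [h1, h2]
          rw [Finset.sum_congr rfl (fun x _ => this x), Finset.sum_add_distrib,
            Finset.sum_ite_eq' s ((u,v) : V × V) (fun _ => f v - f u),
            Finset.sum_ite_eq' s ((v,u) : V × V) (fun _ => f v - f u)]
          simp [huv, hvu]
          ring

end Aux

/-- If `p₁, …, p_N` are paths from `a` to `b` regarded as 1-chains and `α₁, …, α_N` are complex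
numbers, then `|Σ αⱼ| ⬝ d_Y(a,b) ≤ ‖Σ αⱼ pⱼ‖₁`.  The factor `1/2` appears because each edge
is counted with both orientations in the sum over `V × V`. -/
theorem abs_sum_mul_dist_le_l1_norm_of_chain {V : Type*} (Y : SimpleGraph V)
    (hY : Y.Connected) (a b : V) (N : ℕ) (p : Fin N → Y.Walk a b) (α : Fin N → ℂ) :
    ‖∑ j, α j‖ * (Y.dist a b : ℝ) ≤
      (1 / 2) * ∑' x : V × V, ‖∑ j, α j * walkChain (p j) x‖ := by
  set f : V → ℂ := fun v => ((Y.dist a v : ℝ) : ℂ) with hf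
  set s : Finset (V × V) := Finset.univ.biUnion (fun j => walkSupp (p j)) with hsdef
  set F : V × V → ℂ := fun x => ∑ j, α j * walkChain (p j) x with hF
  have hFzero : ∀ x ∉ s, ‖F x‖ = 0 := by
    intro x hx
    have : ∀ j : Fin N, walkChain (p j) x = 0 := by
      intro j
      apply walkChain_eq_zero
      intro h
      exact hx (Finset.mem_biUnion.2 ⟨j, Finset.mem_univ _, h⟩)
    simp [hF, this]
  have htsum : ∑' x : V × V, ‖F x‖ = ∑ x ∈ s, ‖F x‖ :=
    tsum_eq_sum hFzero
  -- pairing identity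
  have hpair : ∑ x ∈ s, F x * (f x.2 - f x.1) = 2 * (∑ j, α j) * ((Y.dist a b : ℝ) : ℂ) := by
    have : ∑ x ∈ s, F x * (f x.2 - f x.1)
        = ∑ j, α j * ∑ x ∈ s, walkChain (p j) x * (f x.2 - f x.1) := by
      calc ∑ x ∈ s, F x * (f x.2 - f x.1)
          = ∑ x ∈ s, ∑ j, α j * (walkChain (p j) x * (f x.2 - f x.1)) := by
            apply Finset.sum_congr rfl; intro x _
            rw [hF]; rw [Finset.sum_mul]
            apply Finset.sum_congr rfl; intro j _; ring
        _ = ∑ j, ∑ x ∈ s, α j * (walkChain (p j) x * (f x.2 - f x.1)) :=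
            Finset.sum_comm
        _ = ∑ j, α j * ∑ x ∈ s, walkChain (p j) x * (f x.2 - f x.1) := by
            apply Finset.sum_congr rfl; intro j _; rw [Finset.mul_sum]
    rw [this]
    have hj : ∀ j : Fin N, ∑ x ∈ s, walkChain (p j) x * (f x.2 - f x.1)
        = 2 * (f b - f a) := by
      intro j
      exact sum_walkChain_mul (p j) f s
        (fun x hx => Finset.mem_biUnion.2 ⟨j, Finset.mem_univ _, hx⟩)
    simp only [hj, Finset.sum_mul]
    have : f b - f a = ((Y.dist a b : ℝ) : ℂ) := by
      simp [hf, SimpleGraph.dist_self]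
    rw [← Finset.sum_mul, this]; ring
  -- Lipschitz bound on s
  have hg : ∀ x ∈ s, ‖f x.2 - f x.1‖ ≤ 1 := by
    intro x hx
    obtain ⟨j, _, hxj⟩ := Finset.mem_biUnion.1 hx
    have hadj : Y.Adj x.1 x.2 := mem_supp_adj (p j) hxj
    have h1 : Y.dist a x.2 ≤ Y.dist a x.1 + 1 := by
      have := hY.dist_triangle (u := a) (v := x.1) (w := x.2)
      rwa [SimpleGraph.dist_eq_one_iff_adj.2 hadj] at this
    have h2 : Y.dist a x.1 ≤ Y.dist a x.2 + 1 := by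
      have := hY.dist_triangle (u := a) (v := x.2) (w := x.1)
      rwa [SimpleGraph.dist_eq_one_iff_adj.2 hadj.symm] at this
    have h1' : (Y.dist a x.2 : ℝ) ≤ (Y.dist a x.1 : ℝ) + 1 := by exact_mod_cast h1
    have h2' : (Y.dist a x.1 : ℝ) ≤ (Y.dist a x.2 : ℝ) + 1 := by exact_mod_cast h2
    have habs : |((Y.dist a x.2 : ℝ)) - (Y.dist a x.1 : ℝ)| ≤ 1 := by
      rw [abs_le]; constructor <;> linarith
    have : f x.2 - f x.1 = (((Y.dist a x.2 : ℝ) - (Y.dist a x.1 : ℝ) : ℝ) : ℂ) := by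
      simp [hf]
    rw [this, Complex.norm_real, Real.norm_eq_abs]
    exact habs
  -- assemble
  have hineq : ‖∑ x ∈ s, F x * (f x.2 - f x.1)‖
      ≤ ∑ x ∈ s, ‖F x‖ := by
    calc ‖∑ x ∈ s, F x * (f x.2 - f x.1)‖
        ≤ ∑ x ∈ s, ‖F x * (f x.2 - f x.1)‖ :=
          norm_sum_le _ _
      _ ≤ ∑ x ∈ s, ‖F x‖ := by
          apply Finset.sum_le_sum
          intro x hx
          rw [norm_mul]
          calc ‖F x‖ * ‖f x.2 - f x.1‖
              ≤ ‖F x‖ * 1 :=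
                mul_le_mul_of_nonneg_left (hg x hx) (norm_nonneg _)
            _ = ‖F x‖ := mul_one _
  rw [hpair] at hineq
  have hd : (0 : ℝ) ≤ (Y.dist a b : ℝ) := Nat.cast_nonneg _
  have hlhs : ‖2 * (∑ j, α j) * ((Y.dist a b : ℝ) : ℂ)‖
      = 2 * (‖∑ j, α j‖ * (Y.dist a b : ℝ)) := by
    rw [norm_mul, norm_mul, Complex.norm_real, Complex.norm_two, Real.norm_eq_abs, abs_of_nonneg hd]
    ring
  rw [hlhs] at hineq
  rw [htsum]
  linarith
end

section
/- Let G be a group, H ≤ G, r : H → ℓ²(H) an array into the left regular representation, and r̃(f,g) = λ_G(f) r(f⁻¹g) for f⁻¹g ∈ H (0 otherwise). Then for every g ∈ H, sup_{h ∈ H} ‖r̃(g, h) - r̃(1, h)‖₂ = sup_{h ∈ H} ‖r̃(1, h) - r̃(1, hg)‖₂, and both are finite. -/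
open scoped Classical Pointwise

/-- The ℓ²-norm of a function on a group. -/
noncomputable def l2norm {G : Type*} (f : G → ℂ) : ℝ := Real.sqrt (∑' x, ‖f x‖ ^ 2)

lemma l2norm_congr {G : Type*} (f g : G → ℂ) (h : ∀ x, ‖f x‖ = ‖g x‖) :
    l2norm f = l2norm g := by
  unfold l2norm; congr 1; exact tsum_congr fun x => by rw [h x]

lemma l2norm_comp_mulLeft {G : Type*} [Group G] (f : G → ℂ) (a : G) :
    l2norm (fun x => f (a * x)) = l2norm f := by
  unfold l2norm; congr 1
  exact (Equiv.mulLeft a).tsum_eq fun x => ‖f x‖ ^ 2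

/-- `rt r f g = λ_G(f) r(f⁻¹ g)` when `f⁻¹ g ∈ H`, and `0` otherwise, where `r : H → ℓ²(H) ⊆ ℓ²(G)`
is given as a map `G → (G → ℂ)` (only its values on `H` matter). -/
noncomputable def rt {G : Type*} [Group G] (H : Subgroup G) (r : G → G → ℂ) (f g : G) : G → ℂ :=
  if f⁻¹ * g ∈ H then fun x => r (f⁻¹ * g) (f⁻¹ * x) else 0

/-- The constant `K_g = sup_{h ∈ H} ‖r̃(g,h) - r̃(1,h)‖₂`. -/
noncomputable def Kc {G : Type*} [Group G] (H : Subgroup G) (r : G → G → ℂ) (g : G) : ℝ :=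
  sSup (Set.range fun h : H => l2norm (fun x => rt H r g h x - rt H r 1 h x))

section Array

variable {G : Type*} [Group G] (H : Subgroup G) (r : G → G → ℂ)
theorem rt_sup_eq_and_finite
    (hmem : ∀ h ∈ H, Memℓp (r h) 2)
    (hsupp : ∀ h ∈ H, ∀ x : G, x ∉ (H : Set G) → r h x = 0)
    (hanti : ∀ h ∈ H, (fun x => r h⁻¹ (h⁻¹ * x)) = fun x => -(r h x))
    (hbdd : ∀ h ∈ H, ∃ C : ℝ, ∀ k ∈ H, l2norm (fun x => r (h * k) x - r k (h⁻¹ * x)) ≤ C)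
    (g : G) (hg : g ∈ H) :
    sSup (Set.range fun h : H => l2norm (fun x => rt H r g h x - rt H r 1 h x)) =
      sSup (Set.range fun h : H => l2norm (fun x => rt H r 1 h x - rt H r 1 ((h : G) * g) x)) ∧
    BddAbove (Set.range fun h : H => l2norm (fun x => rt H r g h x - rt H r 1 h x)) ∧
    BddAbove (Set.range fun h : H => l2norm (fun x => rt H r 1 h x - rt H r 1 ((h : G) * g) x)) := by
  have rt_one : ∀ a : G, a ∈ H → rt H r 1 a = fun x => r a x := by
    intro a ha
    unfold rt
    rw [if_pos (by simpa using ha)]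
    funext x; simp
  have rt_g : ∀ a : G, a ∈ H → rt H r g a = fun x => r (g⁻¹ * a) (g⁻¹ * x) := by
    intro a ha
    unfold rt
    rw [if_pos (mul_mem (inv_mem hg) ha)]
  set F := fun h : H => l2norm (fun x => rt H r g h x - rt H r 1 h x) with hF
  set S := fun h : H => l2norm (fun x => rt H r 1 h x - rt H r 1 ((h : G) * g) x) with hS
  -- first express F h concretely
  have Fval : ∀ h : H, F h = l2norm (fun x => r (g⁻¹ * (h : G)) (g⁻¹ * x) - r h x) := by
    intro h
    rw [hF]
    simp only [rt_g (h : G) h.2, rt_one (h : G) h.2]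
  have Sval : ∀ h : H, S h = l2norm (fun x => r (h : G) x - r ((h : G) * g) x) := by
    intro h
    rw [hS]
    simp only [rt_one (h : G) h.2, rt_one ((h : G) * g) (mul_mem h.2 hg)]
  -- key : F h = S h⁻¹
  have key : ∀ h : H, F h = S h⁻¹ := by
    intro h
    have hh : (h : G) ∈ H := h.2
    rw [Fval, Sval]
    have e1 := congrFun (hanti ((h : G)⁻¹ * g) (mul_mem (inv_mem hh) hg))
    have e2 := congrFun (hanti (h : G) hh)
    calc l2norm (fun x => r (g⁻¹ * (h : G)) (g⁻¹ * x) - r h x)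
        = l2norm (fun x => r (g⁻¹ * (h : G)) (g⁻¹ * (g * x)) - r h (g * x)) :=
          (l2norm_comp_mulLeft (fun x => r (g⁻¹ * (h : G)) (g⁻¹ * x) - r h x) g).symm
      _ = l2norm (fun x => r ((h : G)⁻¹) (((h : G)⁻¹ * g) * x) - r ((h : G)⁻¹ * g) (((h : G)⁻¹ * g) * x)) := by
          apply l2norm_congr
          intro x
          have h1 : r (g⁻¹ * (h : G)) (g⁻¹ * (g * x)) = -(r ((h : G)⁻¹ * g) (((h : G)⁻¹ * g) * x)) := by
            have := e1 (((h : G)⁻¹ * g) * x)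
            simp only [mul_inv_rev, inv_inv, inv_mul_cancel_left] at this ⊢
            rw [← this]
            group
          have h2 : r (h : G) (g * x) = -(r ((h : G)⁻¹) (((h : G)⁻¹ * g) * x)) := by
            have := e2 (g * x)
            rw [mul_assoc, this, neg_neg]
          rw [h1, h2, neg_sub_neg]
      _ = l2norm (fun x => r ((h : G)⁻¹) x - r ((h : G)⁻¹ * g) x) :=
          l2norm_comp_mulLeft (fun x => r ((h : G)⁻¹) x - r ((h : G)⁻¹ * g) x) ((h : G)⁻¹ * g)
      _ = l2norm (fun x => r ((h⁻¹ : H) : G) x - r (((h⁻¹ : H) : G) * g) x) := by norm_cast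
  have hFS : F = S ∘ (Equiv.inv H) := funext fun h => key h
  have range_eq : Set.range F = Set.range S := by
    rw [hFS]
    exact (Equiv.inv H).surjective.range_comp S
  have bdd1 : BddAbove (Set.range F) := by
    obtain ⟨C, hC⟩ := hbdd g hg
    refine ⟨C, ?_⟩
    rintro _ ⟨h, rfl⟩
    have := hC (g⁻¹ * (h : G)) (mul_mem (inv_mem hg) h.2)
    rw [mul_inv_cancel_left] at this
    calc F h = l2norm (fun x => r (h : G) x - r (g⁻¹ * (h : G)) (g⁻¹ * x)) := by
          rw [Fval]
          exact l2norm_congr _ _ fun x => norm_sub_rev _ _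
      _ ≤ C := this
  exact ⟨by rw [range_eq], bdd1, range_eq ▸ bdd1⟩

end Array
end
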